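/- For all ε ∈ (0,1], λ > 0, η ∈ ℝ, k ∈ ℝ, the determinant δ̃_ε(λ,η,k) of the matrix D̃_ε(λ,η,k) equals ε⁸λ⁴ + 8ε⁶λ³γR_ε + 4ε⁴λ²·[5(γR_ε)² + ω̄² + (Δω/2)² − (γεR′(k)η/2)²] + 4ε²λγR_ε·[4(γR_ε)² + 4ω̄² + Δω² − (γεR′(k)η)²] + 4·[(γR_ε·Δω)² − 2ε·γ²R_ε·Δω·ω̄·R′(k)·η + (ω̄·Δω)²] + 16·(γR_ε·ω̄)². -/
import Mathlib


noncomputable section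

open Real Matrix Complex

/-- Dispersion relation `ω(k) = 2√α·sin²(πk)`. -/
def ω (α k : ℝ) : ℝ := 2 * Real.sqrt α * Real.sin (π * k) ^ 2

/-- `R(k) = 2·sin²(πk)·(1 + 2cos²(πk))`. -/
def R (k : ℝ) : ℝ := 2 * Real.sin (π * k) ^ 2 * (1 + 2 * Real.cos (π * k) ^ 2)

/-- `R′(k) = 2π·(sin(2πk) + sin(4πk))`. -/
def R' (k : ℝ) : ℝ := 2 * π * (Real.sin (2 * π * k) + Real.sin (4 * π * k))

/-- `R″(k) = 4π²·(4cos²(2πk) + cos(2πk) − 2)`. -/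
def R'' (k : ℝ) : ℝ := 4 * π ^ 2 * (4 * Real.cos (2 * π * k) ^ 2 + Real.cos (2 * π * k) - 2)

/-- `R_ε = R(k) + ((εη)²/8)·R″(k)`. -/
def Rε (ε η k : ℝ) : ℝ := R k + (ε * η) ^ 2 / 8 * R'' k

/-- `ω̄ = (ω(k + εη/2) + ω(k − εη/2))/2`. -/
def ωbar (α ε η k : ℝ) : ℝ := (ω α (k + ε * η / 2) + ω α (k - ε * η / 2)) / 2

/-- `Δω = ω(k + εη/2) − ω(k − εη/2)`. -/
def Δω (α ε η k : ℝ) : ℝ := ω α (k + ε * η / 2) - ω α (k - ε * η / 2)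

/-- `D̃₁ = ε²λ + 2γR_ε + i·Δω`. -/
def D₁ (α γ ε lam η k : ℝ) : ℂ :=
  (ε ^ 2 * lam + 2 * γ * Rε ε η k : ℝ) + Complex.I * (Δω α ε η k : ℝ)

/-- `D̃₂ = ε²λ + 2γR_ε + 2i·ω̄`. -/
def D₂ (α γ ε lam η k : ℝ) : ℂ :=
  (ε ^ 2 * lam + 2 * γ * Rε ε η k : ℝ) + 2 * Complex.I * (ωbar α ε η k : ℝ)

/-- `D̃₊ = −γR_ε + (γε/2)·R′(k)·η`. -/
def Dplus (γ ε η k : ℝ) : ℝ := -γ * Rε ε η k + γ * ε / 2 * R' k * η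

/-- `D̃₋ = −γR_ε − (γε/2)·R′(k)·η`. -/
def Dminus (γ ε η k : ℝ) : ℝ := -γ * Rε ε η k - γ * ε / 2 * R' k * η

/-- The 4×4 matrix `D̃_ε(λ,η,k)`. -/
def Dmat (α γ ε lam η k : ℝ) : Matrix (Fin 4) (Fin 4) ℂ :=
  !![D₁ α γ ε lam η k, (Dplus γ ε η k : ℂ), (Dminus γ ε η k : ℂ), 0;
     (Dplus γ ε η k : ℂ), D₂ α γ ε lam η k, 0, (Dminus γ ε η k : ℂ);
     (Dminus γ ε η k : ℂ), 0, (starRingEnd ℂ) (D₂ α γ ε lam η k), (Dplus γ ε η k : ℂ);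
     0, (Dminus γ ε η k : ℂ), (Dplus γ ε η k : ℂ), (starRingEnd ℂ) (D₁ α γ ε lam η k)]

/-- `δ̃_ε(λ,η,k) = det D̃_ε(λ,η,k)`. -/
def δdet (α γ ε lam η k : ℝ) : ℂ := (Dmat α γ ε lam η k).det


lemma key_det (a d w p m : ℝ) :
    (!![(a:ℂ) + Complex.I * (d:ℝ), (p:ℂ), (m:ℂ), 0;
        (p:ℂ), (a:ℂ) + 2 * Complex.I * (w:ℝ), 0, (m:ℂ);
        (m:ℂ), 0, (a:ℂ) - 2 * Complex.I * (w:ℝ), (p:ℂ);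
        0, (m:ℂ), (p:ℂ), (a:ℂ) - Complex.I * (d:ℝ)]).det
    = ((a^4 + a^2*d^2 + 4*a^2*w^2 - 2*a^2*(p^2+m^2) + 4*d^2*w^2
        + 4*d*w*(p^2-m^2) + (p^2-m^2)^2 : ℝ) : ℂ) := by
  simp [Matrix.det_succ_row_zero, Fin.sum_univ_succ, Fin.succAbove]
  push_cast
  linear_combination ((4:ℂ)*d*w*m^2 - 4*d*w*p^2 - 4*d^2*w^2 - 4*a^2*w^2 - a^2*d^2
    + 4*d^2*w^2*Complex.I^2) * Complex.I_sq

theorem det_Dmat_formula (α γ : ℝ) (hα : 0 < α) (hγ : 0 < γ) (ε lam η k : ℝ)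
    (hε : ε ∈ Set.Ioc (0:ℝ) 1) (hlam : 0 < lam) :
    δdet α γ ε lam η k =
      (ε ^ 8 * lam ^ 4 + 8 * ε ^ 6 * lam ^ 3 * γ * Rε ε η k
        + 4 * ε ^ 4 * lam ^ 2 *
            (5 * (γ * Rε ε η k) ^ 2 + ωbar α ε η k ^ 2 + (Δω α ε η k / 2) ^ 2
              - (γ * ε * R' k * η / 2) ^ 2)
        + 4 * ε ^ 2 * lam * (γ * Rε ε η k) *
            (4 * (γ * Rε ε η k) ^ 2 + 4 * ωbar α ε η k ^ 2 + Δω α ε η k ^ 2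
              - (γ * ε * R' k * η) ^ 2)
        + 4 * ((γ * Rε ε η k * Δω α ε η k) ^ 2
              - 2 * ε * γ ^ 2 * Rε ε η k * Δω α ε η k * ωbar α ε η k * R' k * η
              + (ωbar α ε η k * Δω α ε η k) ^ 2)
        + 16 * (γ * Rε ε η k * ωbar α ε η k) ^ 2 : ℝ) := by
  have h1 : D₁ α γ ε lam η k
      = ((ε ^ 2 * lam + 2 * γ * Rε ε η k : ℝ) : ℂ) + Complex.I * ((Δω α ε η k : ℝ) : ℂ) := rfl
  have h2 : D₂ α γ ε lam η k
      = ((ε ^ 2 * lam + 2 * γ * Rε ε η k : ℝ) : ℂ) + 2 * Complex.I * ((ωbar α ε η k : ℝ) : ℂ) := rfl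
  have hc1 : (starRingEnd ℂ) (D₁ α γ ε lam η k)
      = ((ε ^ 2 * lam + 2 * γ * Rε ε η k : ℝ) : ℂ) - Complex.I * ((Δω α ε η k : ℝ) : ℂ) := by
    rw [h1]; apply Complex.ext <;> simp <;> ring
  have hc2 : (starRingEnd ℂ) (D₂ α γ ε lam η k)
      = ((ε ^ 2 * lam + 2 * γ * Rε ε η k : ℝ) : ℂ) - 2 * Complex.I * ((ωbar α ε η k : ℝ) : ℂ) := by
    rw [h2]; apply Complex.ext <;> simp <;> ring
  have := key_det (ε ^ 2 * lam + 2 * γ * Rε ε η k) (Δω α ε η k) (ωbar α ε η k)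
      (Dplus γ ε η k) (Dminus γ ε η k)
  rw [δdet, Dmat, hc1, hc2, h1, h2, this]
  congr 1
  simp only [Dplus, Dminus]
  ring
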